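/- arXiv:1109.2225 — 6 statements merged into one kernel-verified Lean document; each statement's English description precedes it below -/
import Mathlib

section
/- Let G be a group admitting no surjective group homomorphism onto ℤ, and let φ, ψ be automorphisms of G. Then the mapping tori G_φ and G_ψ are isomorphic as groups if and only if there exist an automorphism α of G and an element g ∈ G such that either α ∘ φ = c_g ∘ ψ ∘ α or α ∘ φ = c_g ∘ ψ⁻¹ ∘ α (i.e. the image of φ in Out(G) is conjugate to the image of ψ or of ψ⁻¹). -/
/-- The mapping torus `G ⋊_φ ℤ` of an automorphism `φ` of `G`: the semidirect product
in which `n : ℤ` acts on `G` by `φ ^ n`. -/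
abbrev MappingTorus (G : Type*) [Group G] (φ : MulAut G) : Type _ :=
  SemidirectProduct G (Multiplicative ℤ) (zpowersHom (MulAut G) φ)

open SemidirectProduct Multiplicative

section Aux

variable {G : Type*} [Group G]

/-- If `G` has no epimorphism onto `ℤ` then every hom to `ℤ` is trivial. -/
private lemma MT.hom_triv (hG : ∀ f : G →* Multiplicative ℤ, ¬ Function.Surjective f)
    (f : G →* Multiplicative ℤ) : ∀ x, f x = 1 := by
  -- consider the range of f, as additive subgroup
  obtain ⟨a, ha⟩ := Int.subgroup_cyclic (AddSubgroup.toSubgroup.symm (f.range.map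
    (MulEquiv.toMonoidHom (MulEquiv.refl _))) : AddSubgroup ℤ)
  have hmem : ∀ x : G, toAdd (f x) ∈ AddSubgroup.closure ({a} : Set ℤ) := by
    intro x
    rw [← ha]
    exact ⟨f x, ⟨x, rfl⟩, rfl⟩
  rcases eq_or_ne a 0 with rfl | ha0
  · intro x
    have := hmem x
    rw [AddSubgroup.closure_singleton_zero, AddSubgroup.mem_bot] at this
    have : toAdd (f x) = toAdd (1 : Multiplicative ℤ) := this
    exact toAdd.injective this
  · exfalso
    have hdvd : ∀ x : G, a ∣ toAdd (f x) := by
      intro x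
      obtain ⟨n, hn⟩ := AddSubgroup.mem_closure_singleton.1 (hmem x)
      exact ⟨n, by rw [← hn, smul_eq_mul, mul_comm]⟩
    set f' : G →* Multiplicative ℤ :=
      { toFun := fun x => ofAdd (toAdd (f x) / a)
        map_one' := by simp
        map_mul' := by
          intro x y
          simp only [map_mul, toAdd_mul, ← ofAdd_add]
          rw [Int.add_ediv_of_dvd_left (hdvd x)] } with hf'
    apply hG f'
    intro m
    -- a * toAdd m is in the range of toAdd ∘ f
    have : (toAdd m * a) ∈ AddSubgroup.closure ({a} : Set ℤ) :=
      AddSubgroup.mem_closure_singleton.2 ⟨toAdd m, by rw [smul_eq_mul, mul_comm]⟩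
    rw [← ha] at this
    obtain ⟨_, ⟨x, rfl⟩, hx⟩ := this
    refine ⟨x, ?_⟩
    have hx' : toAdd (f x) = toAdd m * a := hx
    have : toAdd (f' x) = toAdd m := by
      simp only [hf', MonoidHom.coe_mk, OneHom.coe_mk, toAdd_ofAdd]
      rw [hx', Int.mul_ediv_cancel _ ha0]
    exact toAdd.injective this

/-- Key conjugation relation for all integer powers. -/
private lemma MT.key_zpow {φ ψ : MulAut G} (α : MulAut G) (s : MappingTorus G ψ)
    (key : ∀ x : G, s * inl (α x) * s⁻¹ = inl (α (φ x))) :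
    ∀ (m : ℤ) (x : G), inl (α ((φ ^ m) x)) = s ^ m * inl (α x) * (s ^ m)⁻¹ := by
  have key' : ∀ x : G, inl (α ((φ⁻¹) x)) = s⁻¹ * inl (α x) * s := by
    intro x
    have := key (φ⁻¹ x)
    rw [MulAut.apply_inv_self] at this
    rw [← this]
    group
  intro m
  induction m using Int.induction_on with
  | zero => intro x; simp
  | succ n ih =>
      intro x
      have h1 : (φ ^ ((n : ℤ) + 1)) x = (φ ^ (n : ℤ)) (φ x) := by
        rw [zpow_add_one]; rfl
      rw [h1, ih (φ x), ← key x]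
      group
  | pred n ih =>
      intro x
      have h1 : (φ ^ (-(n : ℤ) - 1)) x = (φ ^ (-(n : ℤ))) (φ⁻¹ x) := by
        rw [zpow_sub_one]; rfl
      rw [h1, ih (φ⁻¹ x), key' x]
      group

/-- Build an isomorphism of mapping tori from a twisted conjugation datum. -/
private lemma MT.build (φ ψ : MulAut G) (α : MulAut G) (s : MappingTorus G ψ)
    (ε : ℤ) (hε : ε = 1 ∨ ε = -1) (hs : rightHom s = ofAdd ε)
    (key : ∀ x : G, s * inl (α x) * s⁻¹ = inl (α (φ x))) :
    Nonempty (MappingTorus G φ ≃* MappingTorus G ψ) := by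
  have hε0 : ε ≠ 0 := by rcases hε with rfl | rfl <;> decide
  have hε2 : ε * ε = 1 := by rcases hε with rfl | rfl <;> decide
  have hcomp : ∀ n : Multiplicative ℤ,
      ((inl : G →* MappingTorus G ψ).comp α.toMonoidHom).comp
        ((zpowersHom (MulAut G) φ n) : MulAut G).toMonoidHom =
      (MulAut.conj (zpowersHom (MappingTorus G ψ) s n)).toMonoidHom.comp
        ((inl : G →* MappingTorus G ψ).comp α.toMonoidHom) := by
    intro n
    refine MonoidHom.ext fun x => ?_
    simp only [MonoidHom.comp_apply, MulEquiv.coe_toMonoidHom, zpowersHom_apply,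
      MulAut.conj_apply]
    rw [MT.key_zpow α s key (toAdd n) x]
  set F : MappingTorus G φ →* MappingTorus G ψ :=
    SemidirectProduct.lift ((inl : G →* MappingTorus G ψ).comp α.toMonoidHom)
      (zpowersHom (MappingTorus G ψ) s) hcomp with hF
  have hFapp : ∀ p : MappingTorus G φ, F p = inl (α p.left) * s ^ (toAdd p.right) := by
    intro p; rfl
  have hrs : ∀ n : ℤ, rightHom (s ^ n) = ofAdd (ε * n) := by
    intro n
    rw [map_zpow, hs, ← ofAdd_zsmul]
    norm_num [mul_comm]
  have hinj : Function.Injective F := by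
    rw [injective_iff_map_eq_one]
    intro p hp
    have h1 := congrArg rightHom hp
    rw [hFapp, map_mul, rightHom_inl, one_mul, hrs, map_one] at h1
    have h2 : ε * toAdd p.right = 0 := by
      have := congrArg toAdd h1
      simp only [toAdd_ofAdd, toAdd_one] at this
      exact this
    have h3 : toAdd p.right = 0 := by
      rcases mul_eq_zero.1 h2 with h | h
      · exact absurd h hε0
      · exact h
    have h4 : p.right = 1 := toAdd.injective h3
    have h5 : F p = inl (α p.left) := by rw [hFapp, h4]; simp
    rw [h5] at hp
    have h6 : α p.left = 1 := inl_injective (by simpa using hp)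
    have h7 : p.left = 1 := by
      have := congrArg α.symm h6
      simpa using this
    ext
    · exact h7
    · exact congrArg toAdd h4
  have hsurj : Function.Surjective F := by
    intro q
    set n : ℤ := ε * toAdd (rightHom q) with hn
    have h1 : rightHom (q * (s ^ n)⁻¹) = 1 := by
      rw [map_mul, map_inv, hrs]
      have : ε * n = toAdd (rightHom q) := by
        rw [hn, ← mul_assoc, hε2, one_mul]
      rw [this, ofAdd_toAdd]
      simp
    have h2 : q * (s ^ n)⁻¹ ∈ (inl : G →* MappingTorus G ψ).range := by
      rw [range_inl_eq_ker_rightHom]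
      exact h1
    obtain ⟨y, hy⟩ := h2
    refine ⟨⟨α⁻¹ y, ofAdd n⟩, ?_⟩
    rw [hFapp]
    simp only [toAdd_ofAdd]
    have : α ((α⁻¹ : MulAut G) y) = y := α.apply_symm_apply y
    rw [this, hy]
    group
  exact ⟨MulEquiv.ofBijective F ⟨hinj, hsurj⟩⟩

end Aux

/-- If `G` admits no epimorphism onto `ℤ`, then the mapping tori `G_φ` and `G_ψ` are
isomorphic if and only if the image of `φ` in `Out(G)` is conjugate to the image of `ψ`
or of `ψ⁻¹`; i.e. there are `α ∈ Aut(G)` and `g ∈ G` with `α ∘ φ = c_g ∘ ψ ∘ α` or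
`α ∘ φ = c_g ∘ ψ⁻¹ ∘ α`. -/
theorem mappingTorus_iso_iff (G : Type*) [Group G]
    (hG : ∀ f : G →* Multiplicative ℤ, ¬ Function.Surjective f)
    (φ ψ : MulAut G) :
    Nonempty (MappingTorus G φ ≃* MappingTorus G ψ) ↔
      ∃ (α : MulAut G) (g : G),
        α * φ = MulAut.conj g * ψ * α ∨ α * φ = MulAut.conj g * ψ⁻¹ * α := by
  constructor
  · rintro ⟨e⟩
    -- e maps G into G
    have hker : ∀ x : G, (e (inl x)).right = 1 := by
      intro x
      have := MT.hom_triv hG ((rightHom : MappingTorus G ψ →* Multiplicative ℤ).comp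
        (e.toMonoidHom.comp inl)) x
      simpa [rightHom] using this
    have hker' : ∀ x : G, (e.symm (inl x)).right = 1 := by
      intro x
      have := MT.hom_triv hG ((rightHom : MappingTorus G φ →* Multiplicative ℤ).comp
        (e.symm.toMonoidHom.comp inl)) x
      simpa [rightHom] using this
    have hinlψ : ∀ p : MappingTorus G ψ, p.right = 1 → inl p.left = p := by
      intro p hp
      conv_rhs => rw [← inl_left_mul_inr_right p]
      rw [hp]; simp
    have hinlφ : ∀ p : MappingTorus G φ, p.right = 1 → inl p.left = p := by
      intro p hp
      conv_rhs => rw [← inl_left_mul_inr_right p]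
      rw [hp]; simp
    -- the induced automorphism of G
    set α : G ≃* G :=
      { toFun := fun x => (e (inl x)).left
        invFun := fun x => (e.symm (inl x)).left
        left_inv := by
          intro x
          show (e.symm (inl ((e (inl x)).left))).left = x
          rw [hinlψ _ (hker x), MulEquiv.symm_apply_apply]
          rfl
        right_inv := by
          intro x
          show (e (inl ((e.symm (inl x)).left))).left = x
          rw [hinlφ _ (hker' x), MulEquiv.apply_symm_apply]
          rfl
        map_mul' := by
          intro x y
          show (e (inl (x * y))).left = (e (inl x)).left * (e (inl y)).left
          rw [map_mul, map_mul, mul_left, hker x]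
          simp } with hα
    have heinl : ∀ x : G, e (inl x) = inl (α x) := fun x => (hinlψ _ (hker x)).symm
    -- the image of t
    set s : MappingTorus G ψ := e (inr (ofAdd 1)) with hsdef
    set ε : ℤ := toAdd (rightHom s) with hε
    -- ε = ±1 by surjectivity
    have hsur : ∃ n : ℤ, ε * n = 1 := by
      obtain ⟨p, hp⟩ := (rightHom_surjective.comp e.surjective :
        Function.Surjective (rightHom ∘ e)) (ofAdd 1)
      refine ⟨toAdd p.right, ?_⟩
      have hp2 : rightHom (e p) = ofAdd 1 := hp
      have hdecomp : p = inl p.left * inr p.right := (inl_left_mul_inr_right p).symm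
      have hinr : (inr p.right : MappingTorus G φ) = (inr (ofAdd 1)) ^ (toAdd p.right) := by
        rw [← map_zpow]
        congr 1
        rw [← ofAdd_zsmul]
        simp
      rw [hdecomp, map_mul, hinr, map_zpow, map_mul, heinl, rightHom_inl, one_mul,
        map_zpow, ← hsdef, ← ofAdd_toAdd (rightHom s), ← ofAdd_zsmul] at hp2
      have := congrArg toAdd hp2
      simpa [mul_comm, hε] using this
    obtain ⟨n, hn⟩ := hsur
    have hεpm : ε = 1 ∨ ε = -1 := Int.isUnit_iff.1 (IsUnit.of_mul_eq_one _ hn)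
    -- the conjugation relation
    set g : G := s.left with hg
    have hsplit : s = inl g * inr (ofAdd ε) := by
      rw [hg, hε, ofAdd_toAdd]
      exact (inl_left_mul_inr_right s).symm
    have hconj : ∀ x : G, α (φ x) = g * ((ψ ^ ε) (α x)) * g⁻¹ := by
      intro x
      have h1 : (inl (φ x) : MappingTorus G φ)
          = inr (ofAdd 1) * inl x * (inr (ofAdd 1))⁻¹ := by
        rw [← map_inv, ← inl_aut]
        congr 1
      have h2 := congrArg e h1
      rw [heinl, map_mul, map_mul, map_inv, heinl, ← hsdef] at h2
      have h3 : (inr (ofAdd ε) : MappingTorus G ψ) * inl (α x) * (inr (ofAdd ε))⁻¹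
          = inl ((ψ ^ ε) (α x)) := by
        rw [← map_inv, ← inl_aut]
        congr 1
      rw [hsplit, mul_inv_rev] at h2
      refine inl_injective (φ := zpowersHom (MulAut G) ψ) ?_
      rw [h2]
      calc inl g * inr (ofAdd ε) * inl (α x) * ((inr (ofAdd ε))⁻¹ * (inl g)⁻¹)
          = inl g * (inr (ofAdd ε) * inl (α x) * (inr (ofAdd ε))⁻¹) * (inl g)⁻¹ := by
            group
        _ = inl g * inl ((ψ ^ ε) (α x)) * (inl g)⁻¹ := by rw [h3]
        _ = inl (g * ((ψ ^ ε) (α x)) * g⁻¹) := by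
            rw [← map_inv, ← map_mul, ← map_mul]
    refine ⟨α, g, ?_⟩
    rcases hεpm with h1 | h1
    · left
      ext x
      have := hconj x
      rw [h1, zpow_one] at this
      exact this
    · right
      ext x
      have := hconj x
      rw [h1] at this
      rw [show (ψ ^ (-1 : ℤ)) = ψ⁻¹ by group] at this
      exact this
  · rintro ⟨α, g, h | h⟩
    · refine MT.build φ ψ α (inl g * inr (ofAdd (1 : ℤ))) 1 (Or.inl rfl) (by simp [rightHom]) ?_
      intro x
      have hx : α (φ x) = g * ψ (α x) * g⁻¹ := by
        have := congrArg (fun f : MulAut G => f x) h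
        simpa using this
      have h3 : (inr (ofAdd (1 : ℤ)) : MappingTorus G ψ) * inl (α x) * (inr (ofAdd (1 : ℤ)))⁻¹
          = inl (ψ (α x)) := by
        rw [← map_inv, ← inl_aut]
        congr 1
      rw [hx]
      calc inl g * inr (ofAdd (1 : ℤ)) * inl (α x) * (inl g * inr (ofAdd (1 : ℤ)))⁻¹
          = inl g * (inr (ofAdd (1 : ℤ)) * inl (α x) * (inr (ofAdd (1 : ℤ)))⁻¹) * (inl g)⁻¹ := by
            rw [mul_inv_rev]; group
        _ = inl g * inl (ψ (α x)) * (inl g)⁻¹ := by rw [h3]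
        _ = inl (g * ψ (α x) * g⁻¹) := by rw [← map_inv, ← map_mul, ← map_mul]
    · refine MT.build φ ψ α (inl g * inr (ofAdd (-1 : ℤ))) (-1) (Or.inr rfl)
        (by simp [rightHom]) ?_
      intro x
      have hx : α (φ x) = g * ψ⁻¹ (α x) * g⁻¹ := by
        have := congrArg (fun f : MulAut G => f x) h
        simpa using this
      have h3 : (inr (ofAdd (-1 : ℤ)) : MappingTorus G ψ) * inl (α x) * (inr (ofAdd (-1 : ℤ)))⁻¹
          = inl (ψ⁻¹ (α x)) := by
        rw [← map_inv, ← inl_aut]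
        congr 1
      rw [hx]
      calc inl g * inr (ofAdd (-1 : ℤ)) * inl (α x) * (inl g * inr (ofAdd (-1 : ℤ)))⁻¹
          = inl g * (inr (ofAdd (-1 : ℤ)) * inl (α x) * (inr (ofAdd (-1 : ℤ)))⁻¹) * (inl g)⁻¹ := by
            rw [mul_inv_rev]; group
        _ = inl g * inl (ψ⁻¹ (α x)) * (inl g)⁻¹ := by rw [h3]
        _ = inl (g * ψ⁻¹ (α x) * g⁻¹) := by rw [← map_inv, ← map_mul, ← map_mul]
end

section
/- Let G be an NFQ group, let φ be an automorphism of G, let G_φ be the mapping torus, and let π : G_φ → ℤ be the canonical projection onto the ℤ-factor. If H is a subgroup of G_φ of finite index k, then H = π⁻¹(kℤ) (in particular H is normal in G_φ) and H is isomorphic as a group to the mapping torus G_{φ^k}. -/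
/-- A group is NFQ ('no finite quotients') if it has no proper subgroup of finite index. -/
def NFQ (G : Type*) [Group G] : Prop :=
  ∀ H : Subgroup G, H.index ≠ 0 → H = ⊤

lemma zpowers_ofAdd_eq (k : ℤ) :
    Subgroup.zpowers (Multiplicative.ofAdd k) =
      AddSubgroup.toSubgroup (AddSubgroup.zmultiples k) := by
  ext x
  simp only [Subgroup.mem_zpowers_iff]
  constructor
  · rintro ⟨n, rfl⟩
    exact ⟨n, rfl⟩
  · rintro ⟨n, hn⟩
    have hn' : n • k = Multiplicative.toAdd x := hn
    exact ⟨n, by rw [← ofAdd_zsmul, hn', ofAdd_toAdd]⟩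

lemma index_zpowers_ofAdd (k : ℕ) :
    (Subgroup.zpowers (Multiplicative.ofAdd (k : ℤ))).index = k := by
  rw [zpowers_ofAdd_eq, AddSubgroup.index_toSubgroup, Int.index_zmultiples, Int.natAbs_natCast]

/-- A subgroup of `Multiplicative ℤ` of finite index `k` is `⟨ofAdd k⟩`. -/
lemma subgroup_multiplicative_int_eq (S : Subgroup (Multiplicative ℤ)) (k : ℕ) (hk : k ≠ 0)
    (hS : S.index = k) : S = Subgroup.zpowers (Multiplicative.ofAdd (k : ℤ)) := by
  have hmem : Multiplicative.ofAdd (k : ℤ) ∈ S := by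
    have := S.pow_index_mem (Multiplicative.ofAdd (1 : ℤ))
    rw [hS] at this
    simpa [← ofAdd_nsmul] using this
  have hle : Subgroup.zpowers (Multiplicative.ofAdd (k : ℤ)) ≤ S :=
    Subgroup.zpowers_le.mpr hmem
  rcases hle.lt_or_eq with hlt | heq
  · exfalso
    have hfi : (Subgroup.zpowers (Multiplicative.ofAdd (k : ℤ))).FiniteIndex :=
      ⟨by rw [index_zpowers_ofAdd]; exact hk⟩
    have := Subgroup.index_strictAnti hlt
    rw [hS, index_zpowers_ofAdd] at this
    exact lt_irrefl _ this
  · exact heq.symm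

/-- If `G` is NFQ and `H` is a subgroup of the mapping torus `G_φ` of finite index `k`,
then `H = π⁻¹(kℤ)` where `π : G_φ → ℤ` is the canonical projection (in particular `H`
is normal in `G_φ`), and `H ≅ G_{φ^k}`. -/
theorem finiteIndex_subgroup_of_mappingTorus (G : Type*) [Group G] (hG : NFQ G)
    (φ : MulAut G) (H : Subgroup (MappingTorus G φ)) (k : ℕ) (hk : k ≠ 0)
    (hHk : H.index = k) :
    H = Subgroup.comap
          (SemidirectProduct.rightHom : MappingTorus G φ →* Multiplicative ℤ)
          (Subgroup.zpowers (Multiplicative.ofAdd (k : ℤ)))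
      ∧ H.Normal ∧ Nonempty (H ≃* MappingTorus G (φ ^ k)) := by
  have hind : H.index ≠ 0 := by rw [hHk]; exact hk
  set π : MappingTorus G φ →* Multiplicative ℤ :=
    (SemidirectProduct.rightHom : MappingTorus G φ →* Multiplicative ℤ) with hπ
  -- Step 1: the kernel of π (= inl(G)) is contained in H.
  have hcomap : Subgroup.comap (SemidirectProduct.inl :
      G →* MappingTorus G φ) H = ⊤ := by
    apply hG
    rw [Subgroup.index_comap]
    exact fun h0 => hind (Subgroup.index_eq_zero_of_relIndex_eq_zero h0)
  have hker : π.ker ≤ H := by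
    rw [hπ, ← SemidirectProduct.range_inl_eq_ker_rightHom]
    rintro _ ⟨g, rfl⟩
    have : g ∈ Subgroup.comap (SemidirectProduct.inl : G →* MappingTorus G φ) H := by
      rw [hcomap]; trivial
    exact this
  -- Step 2: H = π⁻¹(π(H)) and π(H) has index k in ℤ.
  have hsurj : Function.Surjective π := SemidirectProduct.rightHom_surjective
  have hmap : (Subgroup.map π H).index = k := by
    rw [Subgroup.index_map_eq H hsurj hker, hHk]
  have hmapeq : Subgroup.map π H = Subgroup.zpowers (Multiplicative.ofAdd (k : ℤ)) :=
    subgroup_multiplicative_int_eq _ k hk hmap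
  have hH : H = Subgroup.comap π (Subgroup.zpowers (Multiplicative.ofAdd (k : ℤ))) := by
    rw [← hmapeq, Subgroup.comap_map_eq_self hker]
  refine ⟨hH, ?_, ?_⟩
  · rw [hH]
    exact Subgroup.Normal.comap inferInstance π
  -- Step 3: the isomorphism H ≅ G_{φ^k}.
  · set ψ : Multiplicative ℤ →* Multiplicative ℤ :=
      AddMonoidHom.toMultiplicative (zmultiplesHom ℤ (k : ℤ)) with hψ
    have hcompat : ∀ g : Multiplicative ℤ,
        (MonoidHom.id G).comp ((zpowersHom (MulAut G) (φ ^ k)) g).toMonoidHom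
          = ((zpowersHom (MulAut G) φ) (ψ g)).toMonoidHom.comp (MonoidHom.id G) := by
      intro g
      have key : (φ ^ k) ^ (Multiplicative.toAdd g)
          = φ ^ (Multiplicative.toAdd g • (k : ℤ)) := by
        rw [← zpow_natCast φ k, ← zpow_mul, mul_comm, ← smul_eq_mul]
      ext x
      simp [hψ, key, mul_comm]
    set f : MappingTorus G (φ ^ k) →* MappingTorus G φ :=
      SemidirectProduct.map (MonoidHom.id G) ψ hcompat with hf
    have hinj : Function.Injective f := by
      intro a b hab
      have h1 : a.left = b.left := by
        have := congrArg (fun z : MappingTorus G φ => z.left) hab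
        simpa [hf] using this
      have h2 : ψ a.right = ψ b.right := by
        have := congrArg (fun z : MappingTorus G φ => z.right) hab
        simpa [hf] using this
      have h2' : Multiplicative.toAdd a.right • (k : ℤ)
          = Multiplicative.toAdd b.right • (k : ℤ) := by
        have := congrArg Multiplicative.toAdd h2
        simpa [hψ] using this
      have h2'' : a.right = b.right := by
        have hkz : (k : ℤ) ≠ 0 := Int.natCast_ne_zero.mpr hk
        have := mul_right_cancel₀ (a := Multiplicative.toAdd a.right) (c := Multiplicative.toAdd b.right) hkz (by simpa [smul_eq_mul] using h2')
        exact Multiplicative.toAdd.injective this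
      exact SemidirectProduct.ext h1 h2''
    have hrange : f.range = H := by
      rw [hH]
      ext x
      simp only [Subgroup.mem_comap, Subgroup.mem_zpowers_iff, MonoidHom.mem_range]
      constructor
      · rintro ⟨a, rfl⟩
        refine ⟨Multiplicative.toAdd a.right, ?_⟩
        have : π (f a) = ψ a.right := rfl
        rw [this, hψ, ← ofAdd_zsmul]
        rfl
      · rintro ⟨n, hn⟩
        refine ⟨⟨x.left, Multiplicative.ofAdd n⟩, ?_⟩
        have hr : ψ (Multiplicative.ofAdd n) = x.right := by
          have hx : x.right = Multiplicative.ofAdd ((k : ℤ)) ^ n := hn.symm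
          rw [hψ, hx, ← ofAdd_zsmul]
          rfl
        have hl : f ⟨x.left, Multiplicative.ofAdd n⟩
            = ⟨x.left, ψ (Multiplicative.ofAdd n)⟩ := rfl
        rw [hl, hr]
    exact ⟨((MulEquiv.subgroupCongr hrange.symm).trans
      ((MonoidHom.ofInjective hinj).symm)).symm.symm⟩
end

section
/- Let G be an NFQ group and φ an automorphism of G. Then the mapping torus G_φ is commensurable with G × ℤ if and only if the image of φ in Out(G) has finite order, i.e. if and only if there exist a positive integer k and an element g ∈ G such that φ^k = c_g. -/
lemma mem_zpowers_ofAdd_iff (a : ℤ) (z : Multiplicative ℤ) :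
    z ∈ Subgroup.zpowers (Multiplicative.ofAdd a) ↔ a ∣ z.toAdd := by
  rw [Subgroup.mem_zpowers_iff]
  constructor
  · rintro ⟨k, rfl⟩
    exact ⟨k, by rw [toAdd_zpow, toAdd_ofAdd, smul_eq_mul, mul_comm]⟩
  · rintro ⟨c, hc⟩
    exact ⟨c, Multiplicative.toAdd.injective
      (by rw [toAdd_zpow, toAdd_ofAdd, smul_eq_mul, mul_comm, ← hc])⟩

lemma zpowers_ofAdd_index_ne_zero (a : ℤ) (ha : a ≠ 0) :
    (Subgroup.zpowers (Multiplicative.ofAdd a)).index ≠ 0 := by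
  haveI : NeZero a.natAbs := ⟨Int.natAbs_ne_zero.mpr ha⟩
  have hker : Subgroup.zpowers (Multiplicative.ofAdd a) =
      (AddMonoidHom.toMultiplicative (Int.castAddHom (ZMod a.natAbs))).ker := by
    ext z
    rw [mem_zpowers_ofAdd_iff, MonoidHom.mem_ker]
    simp [AddMonoidHom.toMultiplicative, ZMod.intCast_zmod_eq_zero_iff_dvd, Int.natAbs_dvd,
      ofAdd_eq_one]
  rw [hker, Subgroup.index_ker]
  have : Nonempty ((AddMonoidHom.toMultiplicative (Int.castAddHom (ZMod a.natAbs))).range) := ⟨1⟩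
  exact Nat.card_pos.ne'


lemma NFQ.hom_trivial {G : Type*} [Group G] (hG : NFQ G) (f : G →* Multiplicative ℤ)
    (x : G) : f x = 1 := by
  by_contra hx
  set n : ℤ := (f x).toAdd with hn
  have hn0 : n ≠ 0 := fun h => hx (by rwa [← toAdd_eq_zero])
  have hidx : ((Subgroup.zpowers (Multiplicative.ofAdd (2 * n))).comap f).index ≠ 0 := by
    rw [Subgroup.index_comap]
    intro h0
    exact zpowers_ofAdd_index_ne_zero (2 * n) (by omega)
      (Subgroup.index_eq_zero_of_relIndex_eq_zero h0)
  have htop := hG _ hidx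
  have hxmem : f x ∈ Subgroup.zpowers (Multiplicative.ofAdd (2 * n)) := by
    have : x ∈ (Subgroup.zpowers (Multiplicative.ofAdd (2 * n))).comap f := by
      rw [htop]; trivial
    exact this
  rw [mem_zpowers_ofAdd_iff] at hxmem
  obtain ⟨c, hc⟩ := hxmem
  rw [← hn] at hc
  have h1 : n * 1 = n * (2 * c) := by linarith
  have := mul_left_cancel₀ hn0 h1
  omega


/-- Two groups are commensurable if they have isomorphic subgroups of finite index. -/
def GroupCommensurable (G : Type*) (H : Type*) [Group G] [Group H] : Prop :=
  ∃ (K₁ : Subgroup G) (K₂ : Subgroup H), K₁.index ≠ 0 ∧ K₂.index ≠ 0 ∧ Nonempty (K₁ ≃* K₂)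

lemma mappingTorus_forward (G : Type*) [Group G] (hG : NFQ G) (φ : MulAut G)
    (K₁ : Subgroup (MappingTorus G φ)) (K₂ : Subgroup (G × Multiplicative ℤ))
    (h₁ : K₁.index ≠ 0) (h₂ : K₂.index ≠ 0) (ψ : K₁ ≃* K₂) :
    ∃ k : ℕ, 0 < k ∧ ∃ g : G, φ ^ k = MulAut.conj g := by
  -- Step A : G sits inside K₁
  have hA : ∀ x : G, (SemidirectProduct.inl x : MappingTorus G φ) ∈ K₁ := by
    have htop : K₁.comap (SemidirectProduct.inl :
        G →* MappingTorus G φ) = ⊤ := by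
      refine hG _ ?_
      rw [Subgroup.index_comap]
      intro h0
      exact h₁ (Subgroup.index_eq_zero_of_relIndex_eq_zero h0)
    intro x
    exact Subgroup.mem_comap.mp ((Subgroup.eq_top_iff' _).mp htop x)
  -- Step B : G sits inside K₂
  have hB : ∀ x : G, ((x, 1) : G × Multiplicative ℤ) ∈ K₂ := by
    have htop : K₂.comap (MonoidHom.inl G (Multiplicative ℤ)) = ⊤ := by
      refine hG _ ?_
      rw [Subgroup.index_comap]
      intro h0
      exact h₂ (Subgroup.index_eq_zero_of_relIndex_eq_zero h0)
    intro x
    exact Subgroup.mem_comap.mp ((Subgroup.eq_top_iff' _).mp htop x)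
  -- Step C : an element of K₁ with nontrivial right component
  have hC : ∃ t : MappingTorus G φ, t ∈ K₁ ∧ t.right ≠ 1 := by
    by_contra hc
    push_neg at hc
    have hle : K₁ ≤ (SemidirectProduct.rightHom :
        MappingTorus G φ →* Multiplicative ℤ).ker := fun t ht => hc t ht
    have hdvd := Subgroup.index_dvd_of_le hle
    have hker0 : (SemidirectProduct.rightHom :
        MappingTorus G φ →* Multiplicative ℤ).ker.index = 0 := by
      rw [Subgroup.index_ker, MonoidHom.range_eq_top_of_surjective _
        SemidirectProduct.rightHom_surjective]
      rw [Nat.card_congr Subgroup.topEquiv.toEquiv]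
      exact Nat.card_eq_zero_of_infinite
    rw [hker0] at hdvd
    exact h₁ (zero_dvd_iff.mp hdvd)
  -- Step D : the isomorphism restricts to maps between the copies of G
  set ιK : G →* K₁ := (SemidirectProduct.inl).codRestrict K₁ hA with hιK
  set F : G →* G × Multiplicative ℤ := K₂.subtype.comp (ψ.toMonoidHom.comp ιK) with hFdef
  have hFsnd : ∀ x, (F x).2 = 1 := fun x =>
    hG.hom_trivial ((MonoidHom.snd G (Multiplicative ℤ)).comp F) x
  set θ : G → G := fun x => (F x).1 with hθ
  have hF : ∀ x, F x = (θ x, 1) := fun x => Prod.ext rfl (hFsnd x)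
  set ιK₂ : G →* K₂ := (MonoidHom.inl G (Multiplicative ℤ)).codRestrict K₂ hB with hιK₂
  set F' : G →* MappingTorus G φ := K₁.subtype.comp (ψ.symm.toMonoidHom.comp ιK₂) with hF'def
  have hF'r : ∀ x, (F' x).right = 1 := fun x =>
    hG.hom_trivial ((SemidirectProduct.rightHom).comp F') x
  set θ' : G → G := fun x => (F' x).left with hθ'
  have hF' : ∀ x, F' x = SemidirectProduct.inl (θ' x) := by
    intro x
    ext
    · rfl
    · exact (hF'r x)
  have hθ'mul : ∀ u v, θ' (u * v) = θ' u * θ' v := by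
    intro u v
    apply SemidirectProduct.inl_injective (φ := zpowersHom (MulAut G) φ)
    rw [← hF', map_mul, hF', hF', ← map_mul]
  have hθ'one : θ' 1 = 1 := by
    show (F' 1).left = 1
    rw [map_one]
    rfl
  have hθ'θ : ∀ x, θ' (θ x) = x := by
    intro x
    have e1 : ιK₂ (θ x) = ψ (ιK x) := by
      apply Subtype.ext
      show ((θ x, 1) : G × Multiplicative ℤ) = _
      rw [← hF x]
      rfl
    have e2 : F' (θ x) = SemidirectProduct.inl x := by
      show K₁.subtype (ψ.symm (ιK₂ (θ x))) = _
      rw [e1, MulEquiv.symm_apply_apply]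
      rfl
    show (F' (θ x)).left = x
    rw [e2]
    rfl
  -- Step E : transport the conjugation action
  obtain ⟨t, htK, htr⟩ := hC
  set n : ℤ := t.right.toAdd with hndef
  have hn0 : n ≠ 0 := fun h => htr (by rwa [← toAdd_eq_zero])
  have hconj : ∀ x : G, t * SemidirectProduct.inl x * t⁻¹ =
      SemidirectProduct.inl (t.left * (φ ^ n) x * t.left⁻¹) := by
    intro x
    ext
    · show t.left * (zpowersHom (MulAut G) φ) t.right x *
        (zpowersHom (MulAut G) φ) (t.right * 1) ((zpowersHom (MulAut G) φ) t.right⁻¹ t.left⁻¹)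
          = t.left * (φ ^ n) x * t.left⁻¹
      simp only [mul_one, zpowersHom_apply]
      have h10 : Multiplicative.toAdd t.right⁻¹ = -n := rfl
      rw [h10, ← hndef, zpow_neg, MulAut.apply_inv_self]
    · show t.right * 1 * t.right⁻¹ = 1
      group
  set u : K₂ := ψ ⟨t, htK⟩ with hu
  set g₀ : G := (u : G × Multiplicative ℤ).1 with hg₀
  have hconj₂ : ∀ x : G, F (t.left * (φ ^ n) x * t.left⁻¹) =
      (u : G × Multiplicative ℤ) * F x * (u : G × Multiplicative ℤ)⁻¹ := by
    intro x
    have e3 : ιK (t.left * (φ ^ n) x * t.left⁻¹) = ⟨t, htK⟩ * ιK x * ⟨t, htK⟩⁻¹ := by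
      apply Subtype.ext
      show SemidirectProduct.inl (t.left * (φ ^ n) x * t.left⁻¹)
        = t * SemidirectProduct.inl x * t⁻¹
      exact (hconj x).symm
    show K₂.subtype (ψ (ιK _)) = _
    rw [e3, map_mul, map_mul, map_inv, map_mul, map_mul, map_inv]
    rfl
  have key : ∀ x : G, θ (t.left * (φ ^ n) x * t.left⁻¹) = g₀ * θ x * g₀⁻¹ := by
    intro x
    have h4 := hconj₂ x
    rw [hF, hF] at h4
    have h5 := congrArg Prod.fst h4
    simpa using h5
  have main : ∀ x : G, t.left * (φ ^ n) x * t.left⁻¹ = θ' g₀ * x * (θ' g₀)⁻¹ := by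
    intro x
    have h6 := congrArg θ' (key x)
    rw [hθ'θ, hθ'mul, hθ'mul, hθ'θ] at h6
    have hinv : θ' g₀⁻¹ = (θ' g₀)⁻¹ := by
      have h7 : θ' (g₀ * g₀⁻¹) = θ' g₀ * θ' g₀⁻¹ := hθ'mul _ _
      rw [mul_inv_cancel, hθ'one] at h7
      exact (inv_eq_of_mul_eq_one_right h7.symm).symm
    rw [hinv] at h6
    exact h6
  have hφn : φ ^ n = MulAut.conj (t.left⁻¹ * θ' g₀) := by
    ext x
    have h8 : (φ ^ n) x = t.left⁻¹ * (θ' g₀ * x * (θ' g₀)⁻¹) * t.left := by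
      rw [← main x]
      group
    rw [MulAut.conj_apply, h8]
    group
  rcases Int.natAbs_eq n with he | he
  · refine ⟨n.natAbs, Int.natAbs_pos.mpr hn0, t.left⁻¹ * θ' g₀, ?_⟩
    rw [← zpow_natCast φ n.natAbs, ← he, hφn]
  · refine ⟨n.natAbs, Int.natAbs_pos.mpr hn0, (t.left⁻¹ * θ' g₀)⁻¹, ?_⟩
    have h9 : (n.natAbs : ℤ) = -n := by omega
    rw [← zpow_natCast φ n.natAbs, h9, zpow_neg, hφn]
    exact (map_inv MulAut.conj _).symm

lemma mappingTorus_backward (G : Type*) [Group G] (φ : MulAut G)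
    (h : ∃ k : ℕ, 0 < k ∧ ∃ g : G, φ ^ k = MulAut.conj g) :
    GroupCommensurable (MappingTorus G φ) (G × Multiplicative ℤ) := by
  show ∃ (K₁ : Subgroup (MappingTorus G φ)) (K₂ : Subgroup (G × Multiplicative ℤ)),
    K₁.index ≠ 0 ∧ K₂.index ≠ 0 ∧ Nonempty (K₁ ≃* K₂)
  obtain ⟨k, hk, g, hfk⟩ := h
  set t₀ : MappingTorus G φ := ⟨g⁻¹, Multiplicative.ofAdd (k : ℤ)⟩ with ht₀
  have hzk : ((k : ℤ)) ≠ 0 := by exact_mod_cast hk.ne'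
  have base : ∀ x : G, Commute (SemidirectProduct.inl x : MappingTorus G φ) t₀ := by
    intro x
    show SemidirectProduct.inl x * t₀ = t₀ * SemidirectProduct.inl x
    ext
    · show x * ((zpowersHom (MulAut G) φ) 1 g⁻¹) = g⁻¹ * ((zpowersHom (MulAut G) φ)
        (Multiplicative.ofAdd (k : ℤ)) x)
      rw [map_one]
      show x * g⁻¹ = g⁻¹ * ((φ ^ ((Multiplicative.ofAdd (k : ℤ)).toAdd)) x)
      rw [toAdd_ofAdd, zpow_natCast, hfk, MulAut.conj_apply]
      group
    · show 1 * Multiplicative.ofAdd (k : ℤ) = Multiplicative.ofAdd (k : ℤ) * 1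
      rw [one_mul, mul_one]
  have hcomm : ∀ (x : G) (z : Multiplicative ℤ),
      Commute (SemidirectProduct.inl x : MappingTorus G φ)
        ((zpowersHom (MappingTorus G φ) t₀) z) := fun x z => (base x).zpow_right z.toAdd
  set Φ : G × Multiplicative ℤ →* MappingTorus G φ :=
    (SemidirectProduct.inl).noncommCoprod (zpowersHom (MappingTorus G φ) t₀) hcomm with hΦ
  have hΦ_apply : ∀ (x : G) (z : Multiplicative ℤ),
      Φ (x, z) = SemidirectProduct.inl x * t₀ ^ z.toAdd := fun x z => rfl
  have hright : ∀ (x : G) (z : Multiplicative ℤ),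
      (Φ (x, z)).right = Multiplicative.ofAdd (k : ℤ) ^ z.toAdd := by
    intro x z
    rw [hΦ_apply]
    show SemidirectProduct.rightHom (SemidirectProduct.inl x * t₀ ^ z.toAdd) = _
    rw [map_mul, map_zpow, SemidirectProduct.rightHom_inl, one_mul]
    rfl
  have hinj : Function.Injective Φ := by
    rw [injective_iff_map_eq_one]
    rintro ⟨x, z⟩ h1
    have h2 : Multiplicative.ofAdd (k : ℤ) ^ z.toAdd = 1 := by
      rw [← hright x z, h1]; rfl
    have hz : z = 1 := by
      have := congrArg Multiplicative.toAdd h2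
      rw [toAdd_zpow, toAdd_ofAdd] at this
      have : z.toAdd = 0 := by
        have h3 : z.toAdd • (k : ℤ) = 0 := this
        rw [smul_eq_mul] at h3
        rcases mul_eq_zero.mp h3 with h | h
        · exact h
        · exact absurd h hzk
      exact Multiplicative.toAdd.injective this
    subst hz
    have : SemidirectProduct.inl x = (1 : MappingTorus G φ) := by
      rw [hΦ_apply] at h1; simpa using h1
    have hx : x = 1 := SemidirectProduct.inl_injective (by rw [this, map_one])
    rw [hx]; rfl
  have hle : Subgroup.comap (SemidirectProduct.rightHom)
      (Subgroup.zpowers (Multiplicative.ofAdd (k : ℤ))) ≤ Φ.range := by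
    intro w hw
    obtain ⟨m, hm⟩ := Subgroup.mem_zpowers_iff.mp hw
    refine ⟨(w.left * ((t₀ ^ m).left)⁻¹, Multiplicative.ofAdd m), ?_⟩
    rw [hΦ_apply, toAdd_ofAdd]
    ext
    · show w.left * ((t₀ ^ m).left)⁻¹ * ((zpowersHom (MulAut G) φ) 1 ((t₀ ^ m).left)) = w.left
      rw [map_one]
      show w.left * ((t₀ ^ m).left)⁻¹ * (t₀ ^ m).left = w.left
      group
    · show 1 * (t₀ ^ m).right = w.right
      rw [one_mul]
      have : (t₀ ^ m).right = (SemidirectProduct.rightHom t₀) ^ m := map_zpow SemidirectProduct.rightHom t₀ m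
      rw [this]
      exact hm
  have hidx : Φ.range.index ≠ 0 := by
    have hd := Subgroup.index_dvd_of_le hle
    intro h0
    rw [h0] at hd
    have h1 := zero_dvd_iff.mp hd
    rw [Subgroup.index_comap] at h1
    exact zpowers_ofAdd_index_ne_zero (k : ℤ) hzk
      (Subgroup.index_eq_zero_of_relIndex_eq_zero h1)
  exact ⟨Φ.range, ⊤, hidx, by rw [Subgroup.index_top]; exact one_ne_zero,
    ⟨(MonoidHom.ofInjective hinj).symm.trans Subgroup.topEquiv.symm⟩⟩

/-- If `G` is NFQ, then the mapping torus `G_φ` is commensurable with `G × ℤ` if and only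
if the image of `φ` in `Out(G)` has finite order, i.e. `φ ^ k` is an inner automorphism
for some positive integer `k`. -/
theorem mappingTorus_commensurable_iff (G : Type*) [Group G] (hG : NFQ G) (φ : MulAut G) :
    GroupCommensurable (MappingTorus G φ) (G × Multiplicative ℤ) ↔
      ∃ k : ℕ, 0 < k ∧ ∃ g : G, φ ^ k = MulAut.conj g := by
  constructor
  · rintro ⟨K₁, K₂, h₁, h₂, ⟨ψ⟩⟩
    exact mappingTorus_forward G hG φ K₁ K₂ h₁ h₂ ψ
  · exact mappingTorus_backward G φ
end

section
/- Let A and B be groups with B nontrivial, let G = A * B be their free product, and let a ∈ A. Then the automorphism τ_a of G is inner (i.e. there exists g ∈ G with τ_a = c_g) if and only if a belongs to the center of A. -/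
open Monoid

namespace TauInnerAux

open Monoid.CoprodI

section Words

variable {ι : Type*} {G : ι → Type*} [∀ i, Group (G i)]

theorem neword_toList_eq {i j k l : ι} (u : NeWord G i j) (v : NeWord G k l)
    (h : u.prod = v.prod) : u.toList = v.toList := by
  classical
  have h2 : u.toWord = v.toWord := Word.equiv.symm.injective h
  exact congrArg Word.toList h2

theorem neword_fst_eq {i j k l : ι} (u : NeWord G i j) (v : NeWord G k l)
    (h : u.prod = v.prod) : i = k := by
  have hl := neword_toList_eq u v h
  have h1 := u.toList_head?
  rw [hl, v.toList_head?] at h1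
  exact (Sigma.mk.inj_iff.mp (Option.some.inj h1)).1.symm

theorem neword_snd_eq {i j k l : ι} (u : NeWord G i j) (v : NeWord G k l)
    (h : u.prod = v.prod) : j = l := by
  have hl := neword_toList_eq u v h
  have h1 := u.toList_getLast?
  rw [hl, v.toList_getLast?] at h1
  exact (Sigma.mk.inj_iff.mp (Option.some.inj h1)).1.symm

theorem neword_head_eq {i j l : ι} (u : NeWord G i j) (v : NeWord G i l)
    (h : u.prod = v.prod) : u.head = v.head := by
  have hl := neword_toList_eq u v h
  have h1 := u.toList_head?
  rw [hl, v.toList_head?] at h1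
  have h2 := (Sigma.mk.inj_iff.mp (Option.some.inj h1)).2
  exact (eq_of_heq h2).symm

theorem head_split {i j : ι} (u : NeWord G i j) :
    (∃ c : G i, c ≠ 1 ∧ u.prod = of c) ∨
    ∃ (j₂ : ι) (v : NeWord G j₂ j), j₂ ≠ i ∧ u.prod = of u.head * v.prod ∧ v.last = u.last := by
  induction u with
  | singleton x h => exact Or.inl ⟨x, h, by simp⟩
  | @append i j' k' j u₁ hne u₂ ih₁ _ =>
    rcases ih₁ with ⟨c, hc, hprod⟩ | ⟨j₂, v, hj₂, hprod, _⟩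
    · have hj' : j' = i :=
        neword_snd_eq u₁ (NeWord.singleton c hc) (by simpa using hprod)
      subst hj'
      have hhead : u₁.head = c :=
        neword_head_eq u₁ (NeWord.singleton c hc) (by simpa using hprod)
      exact Or.inr ⟨k', u₂, hne.symm, by simp [hprod, hhead], rfl⟩
    · refine Or.inr ⟨j₂, v.append hne u₂, hj₂, ?_, by simp⟩
      simp only [NeWord.append_prod, NeWord.append_head, hprod, mul_assoc]

theorem tail_split {i j : ι} (u : NeWord G i j) :
    (∃ c : G j, c ≠ 1 ∧ u.prod = of c) ∨
    ∃ (k₂ : ι) (w : NeWord G i k₂), k₂ ≠ j ∧ u.prod = w.prod * of u.last ∧ w.head = u.head := by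
  rcases head_split u.inv with ⟨c, hc, hprod⟩ | ⟨j₂, v, hj₂, hprod, hlast⟩
  · left
    rw [NeWord.inv_prod] at hprod
    refine ⟨c⁻¹, inv_ne_one.mpr hc, ?_⟩
    rw [map_inv, ← hprod, inv_inv]
  · right
    refine ⟨j₂, v.inv, hj₂, ?_, ?_⟩
    · rw [NeWord.inv_prod, NeWord.inv_head] at hprod
      have h2 := congrArg (·⁻¹) hprod
      simpa [mul_inv_rev] using h2
    · rw [NeWord.inv_head, hlast, NeWord.inv_last, inv_inv]

theorem eq_of_of_comm {i : ι} {b : G i} (hb : b ≠ 1) (g : CoprodI G)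
    (hcomm : of b * g = g * of b) : ∃ c : G i, g = of c := by
  classical
  by_cases hg1 : g = 1
  · exact ⟨1, by simp [hg1]⟩
  obtain ⟨W, hW⟩ : ∃ W : Word G, W.prod = g := ⟨Word.equiv g, Word.equiv.symm_apply_apply g⟩
  have hWe : W ≠ Word.empty := by
    intro h; apply hg1; rw [← hW, h, Word.prod_empty]
  obtain ⟨j, k, u, hu⟩ := NeWord.of_word W hWe
  have hup : u.prod = g := by unfold NeWord.prod; rw [hu]; exact hW
  rcases eq_or_ne j i with hj | hj
  · subst hj
    rcases eq_or_ne k j with hk | hk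
    · subst hk
      rcases head_split u with ⟨c, _, hcp⟩ | ⟨j₂, v, hj₂, hvp, _⟩
      · exact ⟨c, by rw [← hup, hcp]⟩
      rcases tail_split u with ⟨c, _, hcp⟩ | ⟨k₂, w, hk₂, hwp, hwhead⟩
      · exact ⟨c, by rw [← hup, hcp]⟩
      exfalso
      by_cases hbu : b * u.head = 1
      · have hL : v.prod = of b * g := by
          rw [← hup, hvp, ← mul_assoc, ← map_mul, hbu, map_one, one_mul]
        by_cases hz : u.last * b = 1
        · have hR : w.prod = g * of b := by
            rw [← hup, hwp, mul_assoc, ← map_mul, hz, map_one, mul_one]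
          exact hj₂ (neword_fst_eq v w (by rw [hL, hcomm, hR]))
        · have hR : (w.append hk₂ (NeWord.singleton (u.last * b) hz)).prod = g * of b := by
            rw [NeWord.append_prod, NeWord.prod_singleton, ← hup, hwp, map_mul, mul_assoc]
          exact hj₂ (neword_fst_eq v _ (by rw [hL, hcomm, hR]))
      · have hL : ((NeWord.singleton (b * u.head) hbu).append (Ne.symm hj₂) v).prod
            = of b * g := by
          rw [NeWord.append_prod, NeWord.prod_singleton, ← hup, hvp, map_mul, mul_assoc]
        by_cases hz : u.last * b = 1
        · have hR : w.prod = g * of b := by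
            rw [← hup, hwp, mul_assoc, ← map_mul, hz, map_one, mul_one]
          exact hk₂ ((neword_snd_eq _ w (by rw [hL, hcomm, hR])).symm)
        · have hR : (w.append hk₂ (NeWord.singleton (u.last * b) hz)).prod = g * of b := by
            rw [NeWord.append_prod, NeWord.prod_singleton, ← hup, hwp, map_mul, mul_assoc]
          have hhead := neword_head_eq
            ((NeWord.singleton (b * u.head) hbu).append (Ne.symm hj₂) v)
            (w.append hk₂ (NeWord.singleton (u.last * b) hz))
            (by rw [hL, hcomm, hR])
          rw [NeWord.append_head, NeWord.singleton_head, NeWord.append_head, hwhead] at hhead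
          exact hb (by simpa using hhead)
    · -- j = i, k ≠ i
      rcases head_split u with ⟨c, _, hcp⟩ | ⟨j₂, v, hj₂, hvp, _⟩
      · exact ⟨c, by rw [← hup, hcp]⟩
      exfalso
      have hR : (u.append hk (NeWord.singleton b hb)).prod = g * of b := by
        rw [NeWord.append_prod, NeWord.prod_singleton, hup]
      by_cases hbu : b * u.head = 1
      · have hL : v.prod = of b * g := by
          rw [← hup, hvp, ← mul_assoc, ← map_mul, hbu, map_one, one_mul]
        exact hj₂ (neword_fst_eq v _ (by rw [hL, hcomm, hR]))
      · have hL : ((NeWord.singleton (b * u.head) hbu).append (Ne.symm hj₂) v).prod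
            = of b * g := by
          rw [NeWord.append_prod, NeWord.prod_singleton, ← hup, hvp, map_mul, mul_assoc]
        exact hk ((neword_snd_eq _ _ (by rw [hL, hcomm, hR])))
  · rcases eq_or_ne k i with hk | hk
    · subst hk
      rcases tail_split u with ⟨c, _, hcp⟩ | ⟨k₂, w, hk₂, hwp, _⟩
      · exact ⟨c, by rw [← hup, hcp]⟩
      exfalso
      have hL : ((NeWord.singleton b hb).append (Ne.symm hj) u).prod = of b * g := by
        rw [NeWord.append_prod, NeWord.prod_singleton, hup]
      by_cases hz : u.last * b = 1
      · have hR : w.prod = g * of b := by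
          rw [← hup, hwp, mul_assoc, ← map_mul, hz, map_one, mul_one]
        exact hj ((neword_fst_eq _ w (by rw [hL, hcomm, hR])).symm)
      · have hR : (w.append hk₂ (NeWord.singleton (u.last * b) hz)).prod = g * of b := by
          rw [NeWord.append_prod, NeWord.prod_singleton, ← hup, hwp, map_mul, mul_assoc]
        exact hj ((neword_fst_eq _ _ (by rw [hL, hcomm, hR])).symm)
    · exfalso
      have hL : ((NeWord.singleton b hb).append (Ne.symm hj) u).prod = of b * g := by
        rw [NeWord.append_prod, NeWord.prod_singleton, hup]
      have hR : (u.append hk (NeWord.singleton b hb)).prod = g * of b := by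
        rw [NeWord.append_prod, NeWord.prod_singleton, hup]
      exact hj ((neword_fst_eq _ _ (by rw [hL, hcomm, hR])).symm)

end Words

section Equiv

universe u v

variable (A : Type u) (B : Type v) [Group A] [Group B]

/-- The two-element family of groups. -/
def F : Bool → Type (max u v) := fun b => cond b (ULift.{v} A) (ULift.{u} B)

instance (b : Bool) : Group (F A B b) :=
  Bool.rec (motive := fun b => Group (F A B b))
    (inferInstanceAs (Group (ULift B))) (inferInstanceAs (Group (ULift A))) b

def φ : Coprod A B →* CoprodI (F A B) :=
  Coprod.lift
    ((CoprodI.of (M := F A B) (i := true)).comp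
      (MulEquiv.ulift.symm : A ≃* ULift A).toMonoidHom)
    ((CoprodI.of (M := F A B) (i := false)).comp
      (MulEquiv.ulift.symm : B ≃* ULift B).toMonoidHom)

def ψ : CoprodI (F A B) →* Coprod A B :=
  CoprodI.lift (fun b => Bool.rec (motive := fun b => F A B b →* Coprod A B)
    (Coprod.inr.comp (MulEquiv.ulift : ULift B ≃* B).toMonoidHom)
    (Coprod.inl.comp (MulEquiv.ulift : ULift A ≃* A).toMonoidHom) b)

def e : Coprod A B ≃* CoprodI (F A B) :=
  MonoidHom.toMulEquiv (φ A B) (ψ A B)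
    (by
      apply Coprod.hom_ext <;> ext x <;>
        simp [φ, ψ, Coprod.lift_apply_inl, Coprod.lift_apply_inr, CoprodI.lift_of,
          MulEquiv.apply_symm_apply, MulEquiv.symm_apply_apply] <;> rfl)
    (by
      apply CoprodI.ext_hom
      intro i
      cases i <;> ext x <;>
        simp [φ, ψ, Coprod.lift_apply_inl, Coprod.lift_apply_inr, CoprodI.lift_of,
          MulEquiv.apply_symm_apply, MulEquiv.symm_apply_apply] <;> rfl)

theorem e_inl (x : A) :
    e A B (Coprod.inl x) = CoprodI.of (M := F A B) (i := true) (ULift.up x) := rfl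

theorem e_inr (y : B) :
    e A B (Coprod.inr y) = CoprodI.of (M := F A B) (i := false) (ULift.up y) := rfl

end Equiv

end TauInnerAux

open TauInnerAux

/-- Let `G = A * B` be a free product with `B` nontrivial, `a ∈ A`, and let `τ` be the
automorphism of `G` with `τ(x) = a⁻¹ x a` for `x ∈ A` and `τ(y) = y` for `y ∈ B`.
Then `τ` is inner if and only if `a` lies in the center of `A`. -/
theorem tau_inner_iff_central (A B : Type*) [Group A] [Group B] [Nontrivial B] (a : A)
    (τ : MulAut (Coprod A B))
    (hτl : ∀ x : A, τ (Coprod.inl x) = Coprod.inl (a⁻¹ * x * a))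
    (hτr : ∀ y : B, τ (Coprod.inr y) = Coprod.inr y) :
    (∃ g : Coprod A B, τ = MulAut.conj g) ↔ a ∈ Subgroup.center A := by
  constructor
  · rintro ⟨g, hg⟩
    rw [Subgroup.mem_center_iff]
    intro x
    obtain ⟨b, hb⟩ := exists_ne (1 : B)
    have hgb : g * Coprod.inr b = Coprod.inr b * g := by
      have h := hτr b
      rw [hg, MulAut.conj_apply] at h
      calc g * Coprod.inr b = (g * Coprod.inr b * g⁻¹) * g := by group
      _ = Coprod.inr b * g := by rw [h]
    have hcomm : CoprodI.of (M := F A B) (i := false) (ULift.up b) * e A B g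
        = e A B g * CoprodI.of (M := F A B) (i := false) (ULift.up b) := by
      rw [← e_inr, ← map_mul, ← hgb, map_mul, e_inr]
    have hb' : (ULift.up b : F A B false) ≠ 1 := fun h => hb (congrArg ULift.down h)
    obtain ⟨c, hc⟩ := eq_of_of_comm hb' (e A B g) hcomm
    have hgc : g = Coprod.inr c.down := by
      apply (e A B).injective
      rw [hc, e_inr]
      rfl
    have hx : a⁻¹ * x * a = x := by
      have h := hτl x
      rw [hg, MulAut.conj_apply, hgc] at h
      by_cases hc1 : c.down = 1
      · rw [hc1] at h
        simp only [map_one, one_mul, inv_one, mul_one] at h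
        exact (Coprod.inl_injective h).symm
      · by_cases hx1 : x = 1
        · simp [hx1]
        exfalso
        have h2 : Coprod.inr c.down * Coprod.inl x
            = Coprod.inl (a⁻¹ * x * a) * Coprod.inr c.down := by
          calc Coprod.inr c.down * Coprod.inl x
              = (Coprod.inr c.down * Coprod.inl x * (Coprod.inr c.down)⁻¹)
                * Coprod.inr c.down := by group
          _ = _ := by rw [h]
        have h3 := congrArg (e A B) h2
        rw [map_mul, map_mul, e_inl, e_inr, e_inl] at h3
        by_cases hx'1 : a⁻¹ * x * a = 1
        · rw [hx'1] at h3
          have hup1 : (ULift.up (1 : A) : F A B true) = 1 := rfl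
          erw [hup1, map_one, one_mul] at h3
          have h4 : CoprodI.of (M := F A B) (i := true) (ULift.up x) = 1 :=
            mul_left_cancel (a := CoprodI.of (M := F A B) (i := false) (ULift.up c.down))
              (by rw [mul_one]; exact h3)
          have h5 : (ULift.up x : F A B true) = 1 :=
            CoprodI.of_injective (M := F A B) true (by erw [h4, map_one])
          exact hx1 (congrArg ULift.down h5)
        · have hcd : (ULift.up c.down : F A B false) ≠ 1 := fun h => hc1 (congrArg ULift.down h)
          have hux : (ULift.up x : F A B true) ≠ 1 := fun h => hx1 (congrArg ULift.down h)
          have hux' : (ULift.up (a⁻¹ * x * a) : F A B true) ≠ 1 :=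
            fun h => hx'1 (congrArg ULift.down h)
          have hfne : (false : Bool) ≠ true := by simp
          have hL : ((CoprodI.NeWord.singleton (M := F A B) (i := false) (ULift.up c.down) hcd).append
              hfne (CoprodI.NeWord.singleton (M := F A B) (i := true) (ULift.up x) hux)).prod
              = CoprodI.of (M := F A B) (i := false) (ULift.up c.down)
                * CoprodI.of (M := F A B) (i := true) (ULift.up x) := by
            erw [CoprodI.NeWord.append_prod, CoprodI.NeWord.prod_singleton,
              CoprodI.NeWord.prod_singleton]
          have hR : ((CoprodI.NeWord.singleton (M := F A B) (i := true) (ULift.up (a⁻¹ * x * a)) hux').append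
              hfne.symm (CoprodI.NeWord.singleton (M := F A B) (i := false) (ULift.up c.down) hcd)).prod
              = CoprodI.of (M := F A B) (i := true) (ULift.up (a⁻¹ * x * a))
                * CoprodI.of (M := F A B) (i := false) (ULift.up c.down) := by
            erw [CoprodI.NeWord.append_prod, CoprodI.NeWord.prod_singleton,
              CoprodI.NeWord.prod_singleton]
          have := neword_fst_eq
            ((CoprodI.NeWord.singleton (M := F A B) (i := false) (ULift.up c.down) hcd).append hfne
              (CoprodI.NeWord.singleton (M := F A B) (i := true) (ULift.up x) hux))
            ((CoprodI.NeWord.singleton (M := F A B) (i := true) (ULift.up (a⁻¹ * x * a)) hux').append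
              hfne.symm (CoprodI.NeWord.singleton (M := F A B) (i := false) (ULift.up c.down) hcd))
            (by rw [hL, hR]; exact h3)
          exact hfne this
    calc x * a = a * (a⁻¹ * x * a) := by group
    _ = a * x := by rw [hx]
  · intro ha
    refine ⟨1, ?_⟩
    have key : ∀ z, τ z = z := by
      intro z
      induction z using Coprod.induction_on with
      | inl x =>
        rw [hτl]
        have hxa : x * a = a * x := Subgroup.mem_center_iff.mp ha x
        congr 1
        rw [mul_assoc, hxa, ← mul_assoc, inv_mul_cancel, one_mul]
      | inr y => exact hτr y
      | mul x y hx hy => rw [map_mul, hx, hy]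
    ext z
    simp [key z]
end

section
/- Let A and B be NFQ groups such that B is nontrivial and A has trivial center, let G = A * B be their free product, and let a ∈ A. Then the mapping torus G_{τ_a} is isomorphic as a group to G_{id} (equivalently, to G × ℤ) if and only if a = 1 in A. -/
open Monoid

section CoprodIAux

open Monoid.CoprodI

variable {ι : Type*} {G : ι → Type*} [∀ i, Group (G i)]

theorem myConjNeOne {H : Type*} [Group H] {m c : H} (hc : c ≠ 1) : m * c * m⁻¹ ≠ 1 := by
  intro h
  apply hc
  have : m⁻¹ * (m * c * m⁻¹) * m = m⁻¹ * 1 * m := by rw [h]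
  group at this
  simpa using this

theorem myWordProdInjective [DecidableEq ι] [∀ i, DecidableEq (G i)] :
    Function.Injective (Word.prod : Word G → CoprodI G) := by
  intro x y h
  have hx := (Word.equiv (M := G)).right_inv x
  have hy := (Word.equiv (M := G)).right_inv y
  rw [← hx, ← hy]
  exact congrArg (Word.equiv (M := G)).toFun h

/-- Key combinatorial lemma: conjugating a nontrivial letter `b : G j` by the product of a
reduced word yields either a nontrivial letter of `G j` (when the word starts with `j` or is
empty), or a genuinely long reduced word starting and ending with the first index of `W`. -/
theorem myConjOfWord (j : ι) (b : G j) (hb : b ≠ 1) (W : Word G) :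
    ((∃ c : G j, c ≠ 1 ∧ W.prod * of b * W.prod⁻¹ = of c) ∧
      (W.fstIdx = none ∨ W.fstIdx = some j)) ∨
    (∃ i₀, W.fstIdx = some i₀ ∧ ∃ nw : NeWord G i₀ i₀,
      nw.prod = W.prod * of b * W.prod⁻¹ ∧ 2 ≤ nw.toList.length) := by
  induction W using Word.consRecOn with
  | empty =>
    left
    exact ⟨⟨b, hb, by simp⟩, Or.inl rfl⟩
  | cons i m W' h1 h2 ih =>
    have hprod : (Word.cons m W' h1 h2).prod = of m * W'.prod := Word.prod_cons _ _ _ _ _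
    have hconj : (Word.cons m W' h1 h2).prod * of b * (Word.cons m W' h1 h2).prod⁻¹
        = of m * (W'.prod * of b * W'.prod⁻¹) * (of m)⁻¹ := by
      rw [hprod]; group
    rcases ih with ⟨⟨c, hc, hcp⟩, _⟩ | ⟨i₁, hfst, nw', hnwprod, hlen⟩
    · by_cases hij : i = j
      · subst hij
        left
        refine ⟨⟨m * c * m⁻¹, myConjNeOne hc, ?_⟩, Or.inr (Word.fstIdx_cons _ _ _ _)⟩
        rw [hconj, hcp, map_mul, map_mul, map_inv]
      · right
        refine ⟨i, Word.fstIdx_cons _ _ _ _,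
          NeWord.append (NeWord.singleton m h2) hij
            (NeWord.append (NeWord.singleton c hc) (fun h => hij h.symm)
              (NeWord.singleton m⁻¹ (inv_ne_one.2 h2))), ?_, ?_⟩
        · rw [hconj, hcp]
          simp [map_inv, mul_assoc]
        · simp
    · have hne : i ≠ i₁ := fun h => h1 (h ▸ hfst)
      right
      refine ⟨i, Word.fstIdx_cons _ _ _ _,
        NeWord.append (NeWord.singleton m h2) hne
          (NeWord.append nw' (fun h => hne h.symm)
            (NeWord.singleton m⁻¹ (inv_ne_one.2 h2))), ?_, ?_⟩
      · rw [hconj]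
        simp only [NeWord.append_prod, NeWord.prod_singleton, map_inv]
        rw [hnwprod]
        simp [mul_assoc]
      · simp
        try omega

theorem myEqOfComm [DecidableEq ι] [∀ i, DecidableEq (G i)]
    (j : ι) (b : G j) (hb : b ≠ 1) (W : Word G) :
    ∀ b' : G j, W.prod * of b = of b' * W.prod → ∃ c : G j, W.prod = of c := by
  induction W using Word.consRecOn with
  | empty => exact fun b' _ => ⟨1, by simp⟩
  | cons i m W' h1 h2 ih =>
    intro b' heq
    rw [Word.prod_cons] at heq
    by_cases hij : i = j
    · subst hij
      have heq' : W'.prod * of b = of (m⁻¹ * b' * m) * W'.prod := by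
        apply mul_left_cancel (a := of m)
        rw [map_mul, map_mul, map_inv]
        calc of m * (W'.prod * of b) = of m * W'.prod * of b := (mul_assoc _ _ _).symm
          _ = of b' * (of m * W'.prod) := heq
          _ = of m * ((of m)⁻¹ * of b' * of m * W'.prod) := by group
      obtain ⟨c, hc⟩ := ih (m⁻¹ * b' * m) heq'
      exact ⟨m * c, by rw [Word.prod_cons, hc, ← map_mul]⟩
    · exfalso
      have hb' : b' ≠ 1 := by
        rintro rfl
        apply hb
        apply of_injective j
        rw [map_one] at heq ⊢
        rw [one_mul] at heq
        exact mul_left_cancel (a := of m * W'.prod) (by rw [heq, mul_one])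
      have hconj : (Word.cons m W' h1 h2).prod * of b * (Word.cons m W' h1 h2).prod⁻¹
          = of b' := by
        rw [Word.prod_cons]
        rw [mul_inv_eq_iff_eq_mul, heq]
      rcases myConjOfWord j b hb (Word.cons m W' h1 h2) with ⟨_, hfst⟩ | ⟨i₀, hfst, nw, hnw, hlen⟩
      · rw [Word.fstIdx_cons] at hfst
        rcases hfst with h | h
        · exact Option.some_ne_none _ h
        · exact hij (Option.some.inj h)
      · rw [Word.fstIdx_cons] at hfst
        have hi₀ : i₀ = i := Option.some.inj hfst.symm
        rw [hconj] at hnw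
        have hWb : (Word.cons b' Word.empty (by simp [Word.fstIdx]) hb').prod = of b' := by
          rw [Word.prod_cons, Word.prod_empty, mul_one]
        have : nw.toWord = Word.cons b' Word.empty (by simp [Word.fstIdx]) hb' := by
          apply myWordProdInjective
          show nw.prod = _
          rw [hnw, hWb]
        have hlist : nw.toList = [⟨j, b'⟩] := congrArg Word.toList this
        rw [hlist] at hlen
        simp at hlen

theorem myMemRangeOfComm {j : ι} {b : G j} (hb : b ≠ 1) {w : CoprodI G}
    (h : w * of b = of b * w) : ∃ c : G j, w = of c := by
  classical
  have hw : (Word.equiv w : Word G).prod = w := (Word.equiv (M := G)).left_inv w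
  obtain ⟨c, hc⟩ := myEqOfComm j b hb (Word.equiv w) b (by rw [hw]; exact h)
  exact ⟨c, by rw [← hw, hc]⟩

end CoprodIAux

section NFQAux

theorem myNfqHomTrivial {A : Type*} [Group A] (hA : NFQ A)
    (f : A →* Multiplicative ℤ) (x : A) : f x = 1 := by
  by_contra hx
  set m : ℤ := Multiplicative.toAdd (f x) with hm
  have hm0 : m ≠ 0 := fun h => hx (toAdd_eq_zero.mp h)
  set n : ℕ := m.natAbs + 1 with hn
  haveI : NeZero n := ⟨Nat.succ_ne_zero _⟩
  set g : A →* Multiplicative (ZMod n) :=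
    (AddMonoidHom.toMultiplicative (Int.castAddHom (ZMod n))).comp f with hg
  have hker : g.ker.index ≠ 0 := by
    rw [Subgroup.index_ker]
    have : Nonempty g.range := ⟨1, one_mem _⟩
    exact Nat.card_pos.ne'
  have htop := hA g.ker hker
  have hxker : x ∈ g.ker := htop ▸ Subgroup.mem_top x
  have hzero : ((m : ZMod n)) = 0 := by
    have : g x = 1 := hxker
    rw [hg] at this
    simpa [AddMonoidHom.toMultiplicative, toAdd_eq_zero] using this
  have hdvd : (n : ℤ) ∣ m := (ZMod.intCast_zmod_eq_zero_iff_dvd m n).mp hzero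
  have : n ∣ m.natAbs := Int.natCast_dvd.mp hdvd
  have := Nat.le_of_dvd (Int.natAbs_pos.mpr hm0) this
  omega

theorem myNfqCoprodHomTrivial {A B : Type*} [Group A] [Group B] (hA : NFQ A) (hB : NFQ B)
    (f : Coprod A B →* Multiplicative ℤ) (g : Coprod A B) : f g = 1 := by
  have hf : f = 1 := by
    apply Coprod.hom_ext
    · ext x
      exact myNfqHomTrivial hA (f.comp Coprod.inl) x
    · ext y
      exact myNfqHomTrivial hB (f.comp Coprod.inr) y
  rw [hf]; rfl

end NFQAux

section FamAux

universe u v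

/-- The two-element family of groups used to view `A ∗ B` inside `CoprodI`. -/
def MyFam (A : Type u) (B : Type v) : Bool → Type (max u v)
  | true => ULift A
  | false => ULift B

instance myFamGroup (A : Type u) (B : Type v) [Group A] [Group B] :
    ∀ b, Group (MyFam A B b)
  | true => inferInstanceAs (Group (ULift A))
  | false => inferInstanceAs (Group (ULift B))

/-- The natural map `A ∗ B →* CoprodI (MyFam A B)`. -/
def myFwd (A : Type u) (B : Type v) [Group A] [Group B] :
    Coprod A B →* CoprodI (MyFam A B) :=
  Coprod.lift
    ((CoprodI.of (M := MyFam A B) (i := true)).comp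
      (MulEquiv.ulift.symm.toMonoidHom : A →* ULift A))
    ((CoprodI.of (M := MyFam A B) (i := false)).comp
      (MulEquiv.ulift.symm.toMonoidHom : B →* ULift B))

/-- Projection of the family onto `A`. -/
def myProjFam (A : Type u) (B : Type v) [Group A] [Group B] :
    ∀ b, MyFam A B b →* A
  | true => (MulEquiv.ulift.toMonoidHom : ULift A →* A)
  | false => 1

end FamAux

theorem mySdEqInl {N Gp : Type*} [Group N] [Group Gp] {φ : Gp →* MulAut N}
    {x : SemidirectProduct N Gp φ} (h : x.right = 1) :
    x = SemidirectProduct.inl x.left := by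
  cases x with
  | mk l r =>
    simp only at h
    subst h
    rfl

/-- Let `A` and `B` be NFQ groups with `B` nontrivial and `A` of trivial center,
`G = A * B`, `a ∈ A`, and let `τ_a` be the automorphism of `G` with `τ_a(x) = a⁻¹ x a`
for `x ∈ A` and `τ_a(y) = y` for `y ∈ B`. Then the mapping torus `G_{τ_a}` is isomorphic
to `G_{id}` if and only if `a = 1`. -/
theorem mappingTorus_tau_iso_iff (A B : Type*) [Group A] [Group B] [Nontrivial B]
    (hA : NFQ A) (hB : NFQ B) (hZ : Subgroup.center A = ⊥) (a : A)
    (τ : MulAut (Coprod A B))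
    (hτl : ∀ x : A, τ (Coprod.inl x) = Coprod.inl (a⁻¹ * x * a))
    (hτr : ∀ y : B, τ (Coprod.inr y) = Coprod.inr y) :
    Nonempty (MappingTorus (Coprod A B) τ ≃* MappingTorus (Coprod A B) 1) ↔ a = 1 := by
  constructor
  · rintro ⟨Φ⟩
    -- Φ maps the fiber G into the fiber G
    have hfib : ∀ g : Coprod A B,
        Φ (SemidirectProduct.inl g) = SemidirectProduct.inl ((Φ (SemidirectProduct.inl g)).left) := by
      intro g
      apply mySdEqInl
      have := myNfqCoprodHomTrivial hA hB
        ((SemidirectProduct.rightHom).comp (Φ.toMonoidHom.comp SemidirectProduct.inl)) g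
      simpa [SemidirectProduct.rightHom_eq_right] using this
    have hfib' : ∀ g : Coprod A B,
        Φ.symm (SemidirectProduct.inl g)
          = SemidirectProduct.inl ((Φ.symm (SemidirectProduct.inl g)).left) := by
      intro g
      apply mySdEqInl
      have := myNfqCoprodHomTrivial hA hB
        ((SemidirectProduct.rightHom).comp (Φ.symm.toMonoidHom.comp SemidirectProduct.inl)) g
      simpa [SemidirectProduct.rightHom_eq_right] using this
    set α : Coprod A B → Coprod A B := fun g => (Φ (SemidirectProduct.inl g)).left with hα
    set β : Coprod A B → Coprod A B := fun g => (Φ.symm (SemidirectProduct.inl g)).left with hβ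
    have hinlα : ∀ g, Φ (SemidirectProduct.inl g) = SemidirectProduct.inl (α g) := hfib
    have hinlβ : ∀ g, Φ.symm (SemidirectProduct.inl g) = SemidirectProduct.inl (β g) := hfib'
    have hβα : ∀ g, β (α g) = g := by
      intro g
      apply SemidirectProduct.inl_injective (φ := zpowersHom (MulAut (Coprod A B)) τ)
      rw [← hinlβ, ← hinlα, MulEquiv.symm_apply_apply]
    have hβmul : ∀ g h, β (g * h) = β g * β h := by
      intro g h
      apply SemidirectProduct.inl_injective (φ := zpowersHom (MulAut (Coprod A B)) τ)
      rw [map_mul, ← hinlβ, ← hinlβ, ← hinlβ, ← map_mul, map_mul]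
    have hβone : β 1 = 1 := by
      apply SemidirectProduct.inl_injective (φ := zpowersHom (MulAut (Coprod A B)) τ)
      rw [← hinlβ]
      simp only [map_one]
    have hβinv : ∀ g, β g⁻¹ = (β g)⁻¹ := by
      intro g
      have := hβmul g⁻¹ g
      rw [inv_mul_cancel, hβone] at this
      exact eq_inv_of_mul_eq_one_left this.symm
    -- conjugation relation in the τ-torus
    set t : MappingTorus (Coprod A B) τ := SemidirectProduct.inr (Multiplicative.ofAdd 1) with ht
    have hconjt : ∀ g : Coprod A B,
        t * SemidirectProduct.inl g * t⁻¹ = SemidirectProduct.inl (τ g) := by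
      intro g
      have := (SemidirectProduct.inl_aut (φ := zpowersHom (MulAut (Coprod A B)) τ)
        (Multiplicative.ofAdd 1) g).symm
      rw [map_inv] at this
      rw [ht]
      rw [this]
      try congr 1
      try simp [zpowersHom_apply]
    -- in the trivial torus, inr is central on inl
    have hcent : ∀ (n : Multiplicative ℤ) (g : Coprod A B),
        (SemidirectProduct.inr n : MappingTorus (Coprod A B) 1) * SemidirectProduct.inl g
          = SemidirectProduct.inl g * SemidirectProduct.inr n := by
      intro n g
      have := SemidirectProduct.inl_aut (φ := zpowersHom (MulAut (Coprod A B)) 1) n g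
      simp only [zpowersHom_apply, one_zpow, MulAut.one_apply] at this
      rw [map_inv] at this
      rw [eq_comm, mul_inv_eq_iff_eq_mul] at this
      rw [← this]
    obtain ⟨w₀, ε, hΦt⟩ : ∃ L R, Φ t = SemidirectProduct.inl L * SemidirectProduct.inr R :=
      ⟨(Φ t).left, (Φ t).right, SemidirectProduct.mk_eq_inl_mul_inr _ _⟩
    have hconjΦt : ∀ g : Coprod A B,
        Φ t * SemidirectProduct.inl g * (Φ t)⁻¹
          = SemidirectProduct.inl (w₀ * g * w₀⁻¹) := by
      intro g
      rw [hΦt]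
      rw [mul_inv_rev]
      calc SemidirectProduct.inl w₀ * SemidirectProduct.inr ε
            * SemidirectProduct.inl g
            * ((SemidirectProduct.inr ε)⁻¹ * (SemidirectProduct.inl w₀)⁻¹)
          = SemidirectProduct.inl w₀ * (SemidirectProduct.inr ε
            * SemidirectProduct.inl g * (SemidirectProduct.inr ε)⁻¹)
            * (SemidirectProduct.inl w₀)⁻¹ := by group
        _ = SemidirectProduct.inl w₀ * SemidirectProduct.inl g
            * (SemidirectProduct.inl w₀)⁻¹ := by
            rw [mul_inv_eq_iff_eq_mul, hcent]
            group
        _ = SemidirectProduct.inl (w₀ * g * w₀⁻¹) := by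
            rw [← map_inv, ← map_mul, ← map_mul]
    have hkey : ∀ g : Coprod A B, α (τ g) = w₀ * α g * w₀⁻¹ := by
      intro g
      apply SemidirectProduct.inl_injective (φ := zpowersHom (MulAut (Coprod A B)) (1 : MulAut (Coprod A B)))
      rw [← hinlα, ← hconjΦt, ← hinlα, ← map_mul, ← map_inv, ← map_mul, hconjt]
    set v : Coprod A B := β w₀ with hv
    have hτconj : ∀ g : Coprod A B, τ g = v * g * v⁻¹ := by
      intro g
      have h1 : β (α (τ g)) = τ g := hβα _
      rw [hkey g] at h1
      rw [hβmul, hβmul, hβinv, hβα] at h1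
      rw [← h1, hv]
    -- v commutes with inr B
    have hvb : ∀ y : B, v * Coprod.inr y = Coprod.inr y * v := by
      intro y
      have := hτconj (Coprod.inr y)
      rw [hτr] at this
      rw [eq_comm, mul_inv_eq_iff_eq_mul] at this
      exact this
    obtain ⟨b₀, hb₀⟩ := exists_ne (1 : B)
    -- transfer to CoprodI
    have hfwdinr : ∀ y : B, myFwd A B (Coprod.inr y)
        = CoprodI.of (M := MyFam A B) (i := false) (ULift.up y) := by
      intro y
      simp [myFwd, Coprod.lift_apply_inr]
      rfl
    have hfwdinl : ∀ x : A, myFwd A B (Coprod.inl x)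
        = CoprodI.of (M := MyFam A B) (i := true) (ULift.up x) := by
      intro x
      simp [myFwd, Coprod.lift_apply_inl]
      rfl
    have hcomm : myFwd A B v * CoprodI.of (M := MyFam A B) (i := false) (ULift.up b₀)
        = CoprodI.of (M := MyFam A B) (i := false) (ULift.up b₀) * myFwd A B v := by
      have := congrArg (myFwd A B) (hvb b₀)
      rw [map_mul, map_mul, hfwdinr] at this
      exact this
    have hb₀' : (ULift.up b₀ : MyFam A B false) ≠ 1 := fun h => hb₀ (congrArg ULift.down h)
    obtain ⟨c, hc⟩ := myMemRangeOfComm hb₀' hcomm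
    -- apply the projection onto A
    set q : Coprod A B →* A := (CoprodI.lift (myProjFam A B)).comp (myFwd A B) with hq
    have hqv : q v = 1 := by
      rw [hq, MonoidHom.comp_apply, hc, CoprodI.lift_of]
      rfl
    have hqinl : ∀ x : A, q (Coprod.inl x) = x := by
      intro x
      rw [hq, MonoidHom.comp_apply, hfwdinl]
      exact (CoprodI.lift_of (myProjFam A B) (i := true) (ULift.up x : MyFam A B true)).trans rfl
    have hcentral : ∀ x : A, a⁻¹ * x * a = x := by
      intro x
      have h1 := hτconj (Coprod.inl x)
      rw [hτl] at h1
      have h2 := congrArg q h1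
      rw [hqinl, map_mul, map_mul, map_inv, hqv, hqinl] at h2
      simpa using h2
    have hmem : a ∈ Subgroup.center A := by
      rw [Subgroup.mem_center_iff]
      intro g
      have := hcentral g
      calc g * a = a * (a⁻¹ * g * a) := by group
        _ = a * g := by rw [this]
    rw [hZ, Subgroup.mem_bot] at hmem
    exact hmem
  · intro ha
    subst ha
    have hτ : τ = 1 := by
      have hhom : (τ : Coprod A B ≃* Coprod A B).toMonoidHom = MonoidHom.id _ := by
        apply Coprod.hom_ext
        · ext x
          simp [hτl x]
        · ext y
          simp [hτr y]
      apply MulEquiv.ext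
      intro g
      have := DFunLike.congr_fun hhom g
      simpa using this
    rw [hτ]
    exact ⟨MulEquiv.refl _⟩
end

section
/- If A and B are nontrivial groups, then every finite normal subgroup of the free product A * B is trivial. -/
open Monoid CoprodI


private theorem aux_neword_infinite {ι : Type*} {G : ι → Type*} [∀ i, Group (G i)]
    (N : Subgroup (CoprodI G)) (hfin : (N : Set (CoprodI G)).Finite)
    {k l : ι} (w : NeWord G k l) (hkl : k ≠ l) (hmem : w.prod ∈ N) : False := by
  classical
  -- powers of w
  let P : ℕ → NeWord G k l := fun n => Nat.rec w (fun _ wn => wn.append hkl.symm w) n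
  have hP : ∀ n, (P n).prod = w.prod ^ (n + 1) := by
    intro n
    induction n with
    | zero => simp [P]
    | succ n ih =>
        show ((P n).append hkl.symm w).prod = _
        rw [NeWord.append_prod, ih, ← pow_succ]
  have hLen : ∀ n, (P n).toList.length = (n + 1) * w.toList.length := by
    intro n
    induction n with
    | zero => simp [P]
    | succ n ih => simp only [P, NeWord.toList, List.length_append] at ih ⊢
                   rw [ih]; ring
  have hprodinj : Function.Injective (Word.prod : Word G → CoprodI G) := by
    intro u v h
    have h1 : ∀ u : Word G, Word.equiv (Word.prod u) = u := fun u =>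
      Word.equiv.apply_eq_iff_eq_symm_apply.mpr rfl
    rw [← h1 u, ← h1 v, h]
  have hwlen : 0 < w.toList.length := List.length_pos_iff.mpr w.toList_ne_nil
  have : (N : Set (CoprodI G)).Infinite := by
    apply Set.infinite_of_injective_forall_mem (f := fun n : ℕ => (P n).prod)
    · intro m n h
      have hW : (P m).toWord = (P n).toWord := hprodinj h
      have hl : (P m).toList.length = (P n).toList.length :=
        congrArg (fun u => u.toList.length) hW
      rw [hLen, hLen] at hl
      have := Nat.eq_of_mul_eq_mul_right hwlen hl
      omega
    · intro n
      rw [hP n]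
      exact pow_mem hmem _
  exact this hfin

private theorem aux_coprodI {ι : Type*} {G : ι → Type*} [∀ i, Group (G i)]
    {i j : ι} (hij : i ≠ j) (a : G i) (ha : a ≠ 1) (b : G j) (hb : b ≠ 1)
    (N : Subgroup (CoprodI G)) (hN : N.Normal)
    (hfin : (N : Set (CoprodI G)).Finite) : N = ⊥ := by
  classical
  rw [Subgroup.eq_bot_iff_forall]
  intro x hx
  by_contra hx1
  have hne : Word.equiv x ≠ Word.empty := by
    intro h
    apply hx1
    have h2 : Word.prod (Word.equiv x) = x := Word.equiv.symm_apply_apply x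
    rw [h] at h2
    rw [← h2, Word.prod_empty]
  obtain ⟨k, l, w, hw⟩ := NeWord.of_word (Word.equiv x) hne
  have hwx : w.prod = x := by
    rw [NeWord.prod, hw]
    exact Word.equiv.symm_apply_apply x
  by_cases hkl : k = l
  · subst hkl
    obtain ⟨t, c, hc, htk⟩ : ∃ (t : ι) (c : G t), c ≠ 1 ∧ k ≠ t := by
      by_cases h : k = i
      · exact ⟨j, b, hb, h ▸ hij⟩
      · exact ⟨i, a, ha, h⟩
    have hc' : c⁻¹ ≠ 1 := inv_ne_one.mpr hc
    let w2 : NeWord G k t :=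
      ((w.append htk (NeWord.singleton c hc)).append htk.symm w.inv).append htk
        (NeWord.singleton c⁻¹ hc')
    have hw2 : w2.prod = x * (of c * x⁻¹ * (of c)⁻¹) := by
      simp [w2, NeWord.append_prod, hwx, mul_assoc]
    have hmem : w2.prod ∈ N := by
      rw [hw2]
      exact mul_mem hx (hN.conj_mem _ (inv_mem hx) (of c))
    exact aux_neword_infinite N hfin w2 htk hmem
  · exact aux_neword_infinite N hfin w hkl (hwx ▸ hx)


universe u v

private def auxG (A : Type u) (B : Type v) : Bool → Type (max u v) :=
  fun b => cond b (ULift.{v} A) (ULift.{u} B)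

private instance auxGGroup (A : Type u) (B : Type v) [Group A] [Group B] :
    ∀ b, Group (auxG A B b) :=
  fun b => match b with
  | true => (inferInstance : Group (ULift A))
  | false => (inferInstance : Group (ULift B))

private def auxPhi (A : Type u) (B : Type v) [Group A] [Group B] :
    Coprod A B →* CoprodI (auxG A B) :=
  Coprod.lift
    ((CoprodI.of (i := true)).comp (MulEquiv.ulift : ULift.{v} A ≃* A).symm.toMonoidHom)
    ((CoprodI.of (i := false)).comp (MulEquiv.ulift : ULift.{u} B ≃* B).symm.toMonoidHom)

private def auxPsi (A : Type u) (B : Type v) [Group A] [Group B] :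
    CoprodI (auxG A B) →* Coprod A B :=
  CoprodI.lift (fun b => match b with
    | true => Coprod.inl.comp (MulEquiv.ulift : ULift.{v} A ≃* A).toMonoidHom
    | false => Coprod.inr.comp (MulEquiv.ulift : ULift.{u} B ≃* B).toMonoidHom)

private def auxEquiv (A : Type u) (B : Type v) [Group A] [Group B] :
    Coprod A B ≃* CoprodI (auxG A B) :=
  MonoidHom.toMulEquiv (auxPhi A B) (auxPsi A B)
    (by
      apply Coprod.hom_ext <;> ext x <;> rfl)
    (by
      apply CoprodI.ext_hom
      intro b
      cases b <;> ext x <;> rfl)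

/-- If `A` and `B` are nontrivial groups, then every finite normal subgroup of the free
product `A * B` is trivial. -/
theorem finite_normal_subgroup_of_coprod (A B : Type*) [Group A] [Group B]
    [Nontrivial A] [Nontrivial B] (N : Subgroup (Coprod A B)) (hN : N.Normal)
    (hfin : (N : Set (Coprod A B)).Finite) :
    N = ⊥ := by
  classical
  let e := auxEquiv A B
  obtain ⟨a0, ha0⟩ := exists_ne (1 : A)
  obtain ⟨b0, hb0⟩ := exists_ne (1 : B)
  have ha : (⟨a0⟩ : auxG A B true) ≠ 1 := fun h => ha0 (congrArg ULift.down h)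
  have hb : (⟨b0⟩ : auxG A B false) ≠ 1 := fun h => hb0 (congrArg ULift.down h)
  have hmap : N.map e.toMonoidHom = ⊥ := by
    apply aux_coprodI (i := true) (j := false) (by simp) _ ha _ hb
    · exact Subgroup.Normal.map hN e.toMonoidHom e.surjective
    · rw [Subgroup.coe_map]
      exact hfin.image _
  rw [Subgroup.eq_bot_iff_forall]
  intro x hx
  have : e x ∈ N.map e.toMonoidHom := ⟨x, hx, rfl⟩
  rw [hmap, Subgroup.mem_bot] at this
  have : e x = e 1 := by rw [this, map_one]
  exact e.injective this
end
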